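/- (Second Lie derivative of the distance constraint for the unicycle: u₂ appears, u₁ does not.) Along any solution of the unicycle model, ρ is twice differentiable and for all t, ρ''(t) = (p(t)/(M·ρ(t)))·u₂(t) + v(t)²/ρ(t) + v(t)·φ(t)·q(t)/ρ(t) − v(t)²·p(t)²/ρ(t)³. In particular the control input u₂ appears linearly with coefficient p/(Mρ) and u₁ does not appear, so the relative degree of the safety constraint ρ − r ≥ 0 with respect to u₂ is 2. -/

import Mathlib

/-- Second Lie derivative of the distance constraint for the unicycle:
`ρ` is twice differentiable and
`ρ'' = (p/(M ρ)) u₂ + v²/ρ + v φ q / ρ − v² p² / ρ³`;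
the control `u₂` appears linearly with coefficient `p/(M ρ)` and `u₁` does not. -/
theorem unicycle_rho_second_derivative
    (M : ℝ) (hM : 0 < M)
    (x y v θ φ u₁ u₂ : ℝ → ℝ)
    (hx : Differentiable ℝ x) (hy : Differentiable ℝ y)
    (hv : Differentiable ℝ v) (hθ : Differentiable ℝ θ)
    (hφ : Differentiable ℝ φ)
    (hu₁ : Continuous u₁) (hu₂ : Continuous u₂)
    (hdx : ∀ t, deriv x t = v t * Real.cos (θ t))
    (hdy : ∀ t, deriv y t = v t * Real.sin (θ t))
    (hdv : ∀ t, deriv v t = u₂ t / M)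
    (hdθ : ∀ t, deriv θ t = φ t)
    (hdφ : ∀ t, deriv φ t = u₁ t)
    (x₀ y₀ : ℝ) (ρ p q : ℝ → ℝ)
    (hρ : ∀ t, ρ t = Real.sqrt ((x t - x₀) ^ 2 + (y t - y₀) ^ 2))
    (hp : ∀ t, p t = (x t - x₀) * Real.cos (θ t) + (y t - y₀) * Real.sin (θ t))
    (hq : ∀ t, q t = -(x t - x₀) * Real.sin (θ t) + (y t - y₀) * Real.cos (θ t))
    (hρpos : ∀ t, 0 < ρ t)
    : (Differentiable ℝ ρ ∧ Differentiable ℝ (deriv ρ)) ∧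
      ∀ t, deriv (deriv ρ) t =
        (p t / (M * ρ t)) * u₂ t + (v t) ^ 2 / ρ t
          + v t * φ t * q t / ρ t
          - (v t) ^ 2 * (p t) ^ 2 / (ρ t) ^ 3 := by

  have hρfun : ρ = fun t => Real.sqrt ((x t - x₀) ^ 2 + (y t - y₀) ^ 2) := funext hρ
  have hSpos : ∀ t, 0 < (x t - x₀) ^ 2 + (y t - y₀) ^ 2 := by
    intro t
    have h := hρpos t
    rw [hρ t] at h
    exact Real.sqrt_pos.mp h
  have hρne : ∀ t, ρ t ≠ 0 := fun t => ne_of_gt (hρpos t)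
  -- first derivative of ρ
  have hρ' : ∀ t, HasDerivAt ρ (v t * p t / ρ t) t := by
    intro t
    have hX := ((hx t).hasDerivAt.sub_const x₀).pow 2
    have hY := ((hy t).hasDerivAt.sub_const y₀).pow 2
    have hSd := hX.add hY
    have hsq := hSd.sqrt (ne_of_gt (hSpos t))
    rw [hρfun]
    refine hsq.congr_deriv ?_
    symm
    simp only [Pi.add_apply, Pi.pow_apply]
    beta_reduce
    rw [hdx, hdy]
    have hs : Real.sqrt ((x t - x₀) ^ 2 + (y t - y₀) ^ 2) = ρ t := (hρ t).symm
    rw [hs, hp t, div_eq_div_iff (hρne t) (mul_ne_zero two_ne_zero (hρne t))]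
    ring
  -- derivative of p
  have hp' : ∀ t, HasDerivAt p (v t + φ t * q t) t := by
    intro t
    have hc : HasDerivAt (fun s => Real.cos (θ s)) (-Real.sin (θ t) * deriv θ t) t :=
      (Real.hasDerivAt_cos (θ t)).comp t (hθ t).hasDerivAt
    have hs : HasDerivAt (fun s => Real.sin (θ s)) (Real.cos (θ t) * deriv θ t) t :=
      (Real.hasDerivAt_sin (θ t)).comp t (hθ t).hasDerivAt
    have h1 := ((hx t).hasDerivAt.sub_const x₀).mul hc
    have h2 := ((hy t).hasDerivAt.sub_const y₀).mul hs
    have h3 := h1.add h2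
    rw [funext hp]
    refine h3.congr_deriv ?_
    symm
    rw [hdx, hdy, hdθ, hq t]
    linear_combination -(v t) * Real.sin_sq_add_cos_sq (θ t)
  have hderivρ : deriv ρ = fun t => v t * p t / ρ t := funext fun t => (hρ' t).deriv
  -- second derivative
  have h2' : ∀ t, HasDerivAt (deriv ρ)
      (((deriv v t * p t + v t * (v t + φ t * q t)) * ρ t
        - v t * p t * (v t * p t / ρ t)) / (ρ t) ^ 2) t := by
    intro t
    have hnum := (hv t).hasDerivAt.mul (hp' t)
    have := hnum.div (hρ' t) (hρne t)
    rw [hderivρ]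
    exact this
  refine ⟨⟨fun t => (hρ' t).differentiableAt, fun t => (h2' t).differentiableAt⟩, ?_⟩
  intro t
  rw [(h2' t).deriv, hdv t]
  have h1 := hρne t
  have h2 := ne_of_gt hM
  field_simp
  ring
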